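/- Let G be a finite non-abelian 2-group of exponent 4 in which every subgroup isomorphic to a minimal non-abelian group is isomorphic to Q₈, H₂ = ⟨a,b | a⁴ = b⁴ = 1, aᵇ = a⁻¹⟩, or H₃₂ (equivalently, G has no subgroup isomorphic to D₈ or H₁₆). Then every involution of G lies in the center of G. -/

import Mathlib

open scoped commutatorElement

section helper
variable {G : Type*} [Group G]

lemma pow_mod_eq {a : G} {n : ℕ} (ha : a ^ n = 1) {p q : ℕ} (h : p % n = q % n) :
    a ^ p = a ^ q := by
  have hp : a ^ p = a ^ (p % n) := by
    conv_lhs => rw [← Nat.div_add_mod p n]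
    rw [pow_add, pow_mul, ha, one_pow, one_mul]
  have hq : a ^ q = a ^ (q % n) := by
    conv_lhs => rw [← Nat.div_add_mod q n]
    rw [pow_add, pow_mul, ha, one_pow, one_mul]
  rw [hp, hq, h]

lemma swap_helper {x y : G} (h : x * y = y * x) (w : G) : x * (y * w) = y * (x * w) := by
  rw [← mul_assoc, h, mul_assoc]

end helper

/-! ### Dihedral model of order 8 -/

structure DD where
  i : ZMod 4
  j : ZMod 2
deriving DecidableEq, Fintype

namespace DD

def dsign : ZMod 2 → ZMod 4 := fun j => if j = 0 then 1 else 3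

instance : Group DD where
  mul a b := ⟨a.i + dsign a.j * b.i, a.j + b.j⟩
  one := ⟨0, 0⟩
  inv a := ⟨-(dsign a.j) * a.i, a.j⟩
  mul_assoc := by decide
  one_mul := by decide
  mul_one := by decide
  inv_mul_cancel := by decide

lemma mul_def (a b : DD) : a * b = ⟨a.i + dsign a.j * b.i, a.j + b.j⟩ := rfl
lemma one_def : (1 : DD) = ⟨0, 0⟩ := rfl

lemma card : Nat.card DD = 8 := by
  have e : DD ≃ ZMod 4 × ZMod 2 :=
    ⟨fun a => (a.i, a.j), fun p => ⟨p.1, p.2⟩, fun a => rfl, fun p => rfl⟩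
  rw [Nat.card_congr e]
  simp [Nat.card_eq_fintype_card]

end DD

section D8

variable {G : Type*} [Group G] {a x : G}

def phiD (a x : G) : DD → G := fun d => a ^ d.i.val * x ^ d.j.val

lemma phiD_mul (ha : a ^ 4 = 1) (hx : x ^ 2 = 1) (hinv : x * a * x = a⁻¹) (d e : DD) :
    phiD a x (d * e) = phiD a x d * phiD a x e := by
  have hainv : a⁻¹ = a ^ 3 := by
    have h4 : a * a ^ 3 = 1 := by rw [← pow_succ']; exact ha
    exact inv_eq_of_mul_eq_one_right h4
  have hxa : ∀ m : ℕ, x * a ^ m = a ^ (3 * m) * x := by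
    intro m
    induction m with
    | zero => simp
    | succ k ih =>
      have h1 : x * a = a ^ 3 * x := by
        calc x * a = x * a * x * x := by
              rw [mul_assoc (x*a), ← pow_two, hx, mul_one]
          _ = a⁻¹ * x := by rw [hinv]
          _ = a ^ 3 * x := by rw [hainv]
      calc x * a ^ (k + 1) = (x * a ^ k) * a := by rw [pow_succ, ← mul_assoc]
        _ = a ^ (3 * k) * (x * a) := by rw [ih, mul_assoc]
        _ = a ^ (3 * k) * (a ^ 3 * x) := by rw [h1]
        _ = a ^ (3 * (k + 1)) * x := by rw [← mul_assoc, ← pow_add]; ring_nf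
  rcases d with ⟨i, j⟩; rcases e with ⟨i', j'⟩
  simp only [DD.mul_def, phiD]
  have key : x ^ j.val * a ^ i'.val = a ^ ((DD.dsign j).val * i'.val) * x ^ j.val := by
    rcases (by decide : ∀ j : ZMod 2, j = 0 ∨ j = 1) j with rfl | rfl
    · simp [DD.dsign, show ((1 : ZMod 4)).val = 1 by decide]
    · simpa [DD.dsign, show ((3 : ZMod 4)).val = 3 by decide,
        show ((1 : ZMod 2)).val = 1 by decide] using hxa i'.val
  calc a ^ (i + DD.dsign j * i').val * x ^ (j + j').val
      = a ^ (i.val + (DD.dsign j).val * i'.val) * x ^ (j.val + j'.val) := by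
        rw [pow_mod_eq ha (p := (i + DD.dsign j * i').val)
          (q := i.val + (DD.dsign j).val * i'.val),
          pow_mod_eq hx (p := (j + j').val) (q := j.val + j'.val)]
        · rw [ZMod.val_add]; omega
        · rw [ZMod.val_add, ZMod.val_mul]
          generalize (DD.dsign j).val * i'.val = m
          omega
    _ = a ^ i.val * (x ^ j.val * a ^ i'.val) * x ^ j'.val := by
        rw [key, pow_add, pow_add]; group
    _ = a ^ i.val * x ^ j.val * (a ^ i'.val * x ^ j'.val) := by group

def phiDHom (ha : a ^ 4 = 1) (hx : x ^ 2 = 1) (hinv : x * a * x = a⁻¹) : DD →* G where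
  toFun := phiD a x
  map_one' := by simp [phiD, DD.one_def]
  map_mul' := phiD_mul ha hx hinv

lemma card_closure_D8 (ha : a ^ 4 = 1) (hx : x ^ 2 = 1) (hinv : x * a * x = a⁻¹)
    (ha2 : a ^ 2 ≠ 1) : Nat.card (Subgroup.closure {a, x} : Subgroup G) = 8 := by
  have ha1 : a ≠ 1 := by intro h; exact ha2 (by rw [h, one_pow])
  have hinj : Function.Injective (phiDHom ha hx hinv) := by
    rw [injective_iff_map_eq_one]
    rintro ⟨i, j⟩ h
    simp only [phiDHom, MonoidHom.coe_mk, OneHom.coe_mk, phiD] at h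
    have hj : j = 0 ∨ j = 1 := (by decide : ∀ j : ZMod 2, j = 0 ∨ j = 1) j
    rcases hj with hj | hj
    · subst hj
      simp only [ZMod.val_zero, pow_zero, mul_one] at h
      have hv : i.val < 4 := ZMod.val_lt i
      interval_cases hiv : (ZMod.val i)
      · have : i = 0 := by rwa [ZMod.val_eq_zero] at hiv
        rw [this]; rfl
      · exfalso; rw [pow_one] at h; exact ha1 h
      · exact absurd h ha2
      · exfalso
        apply ha1
        calc a = a ^ 4 * (a ^ 3)⁻¹ := by group
          _ = 1 := by rw [ha, h]; simp
    · exfalso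
      subst hj
      rw [show ((1 : ZMod 2)).val = 1 by decide, pow_one] at h
      have hxval : x = (a ^ i.val)⁻¹ := (inv_eq_of_mul_eq_one_right h).symm
      have hcomm : x * a = a * x := by
        rw [hxval]; exact ((Commute.refl a).pow_left i.val).inv_left.eq
      apply ha2
      have hii : a⁻¹ = a := by
        rw [← hinv, mul_assoc, ← hcomm, ← mul_assoc, ← pow_two, hx, one_mul]
      have : a * a = 1 := by nth_rewrite 1 [← hii]; exact inv_mul_cancel a
      rw [pow_two, this]
  have hrange : (phiDHom ha hx hinv).range = Subgroup.closure {a, x} := by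
    apply le_antisymm
    · rintro y ⟨⟨i, j⟩, rfl⟩
      have hha : a ∈ Subgroup.closure ({a, x} : Set G) :=
        Subgroup.subset_closure (by simp)
      have hhx : x ∈ Subgroup.closure ({a, x} : Set G) :=
        Subgroup.subset_closure (by simp)
      exact mul_mem (pow_mem hha _) (pow_mem hhx _)
    · rw [Subgroup.closure_le]
      rintro y (rfl | rfl)
      · exact ⟨⟨1, 0⟩, by simp [phiDHom, phiD, show ((1 : ZMod 4)).val = 1 by decide]⟩
      · exact ⟨⟨0, 1⟩, by simp [phiDHom, phiD, show ((1 : ZMod 2)).val = 1 by decide]⟩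
  rw [← hrange, Nat.card_congr (MonoidHom.ofInjective hinj).toEquiv.symm, DD.card]

end D8

/-! ### Model of H₁₆ -/

def MMf : ZMod 4 →+* ZMod 2 := ZMod.castHom (by norm_num : 2 ∣ 4) (ZMod 2)

lemma MMf_val (z : ZMod 4) : (MMf z).val = z.val % 2 := by
  have : MMf z = ((z.val : ℕ) : ZMod 2) := by
    simp [MMf, ZMod.castHom_apply, ZMod.natCast_val]
  rw [this, ZMod.val_natCast]

structure MM where
  i : ZMod 4
  j : ZMod 2
  k : ZMod 2
deriving DecidableEq, Fintype

namespace MM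

instance : Mul MM := ⟨fun a b => ⟨a.i + b.i, a.j + b.j, a.k + b.k + a.j * MMf b.i⟩⟩
instance : One MM := ⟨⟨0, 0, 0⟩⟩
instance : Inv MM := ⟨fun a => ⟨-a.i, -a.j, -a.k + a.j * MMf a.i⟩⟩

lemma mul_def (a b : MM) :
    a * b = ⟨a.i + b.i, a.j + b.j, a.k + b.k + a.j * MMf b.i⟩ := rfl
lemma one_def : (1 : MM) = ⟨0, 0, 0⟩ := rfl
lemma inv_def (a : MM) : a⁻¹ = ⟨-a.i, -a.j, -a.k + a.j * MMf a.i⟩ := rfl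

instance : Group MM where
  mul_assoc a b c := by
    simp only [mul_def, MM.mk.injEq, map_add]
    refine ⟨by ring, by ring, by ring⟩
  one_mul a := by
    cases a
    simp only [mul_def, one_def, MM.mk.injEq]
    refine ⟨by ring, by ring, by simp⟩
  mul_one a := by
    cases a
    simp only [mul_def, one_def, MM.mk.injEq]
    refine ⟨by ring, by ring, by simp⟩
  inv_mul_cancel a := by
    simp only [mul_def, inv_def, one_def, MM.mk.injEq]
    refine ⟨by ring, by ring, by ring⟩

lemma card : Nat.card MM = 16 := by
  have e : MM ≃ ZMod 4 × ZMod 2 × ZMod 2 :=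
    ⟨fun a => (a.i, a.j, a.k), fun p => ⟨p.1, p.2.1, p.2.2⟩, fun a => rfl, fun p => rfl⟩
  rw [Nat.card_congr e]
  simp [Nat.card_eq_fintype_card]

end MM

section H16

variable {G : Type*} [Group G] {a b c : G}

def phiM (a b c : G) : MM → G := fun m => a ^ m.i.val * (b ^ m.j.val * c ^ m.k.val)

variable (ha : a ^ 4 = 1) (hb : b ^ 2 = 1) (hc : c ^ 2 = 1)
  (hab : ⁅a, b⁆ = c) (hCA : c * a = a * c) (hCB : c * b = b * c)

section
include hc hab hCA hCB

omit hab hCA hCB in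
lemma c_inv_eq : c⁻¹ = c := inv_eq_of_mul_eq_one_right (by rw [← pow_two]; exact hc)

lemma hba' : b * a = a * (b * c) := by
  have h1 : a * b = c * (b * a) := by
    rw [← hab, commutatorElement_def]; group
  calc b * a = c⁻¹ * (a * b) := by rw [h1]; group
    _ = (c * a) * b := by rw [c_inv_eq hc, mul_assoc]
    _ = (a * c) * b := by rw [hCA]
    _ = a * (b * c) := by rw [mul_assoc, ← hCB]

lemma keyL1 : ∀ m : ℕ, b * a ^ m = a ^ m * (b * c ^ m) := by
  intro m
  induction m with
  | zero => simp
  | succ k ih =>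
    have e1 : c ^ k * a = a * c ^ k := ((show Commute c a from hCA).pow_left k).eq
    calc b * a ^ (k + 1) = (b * a ^ k) * a := by rw [pow_succ, mul_assoc]
      _ = a ^ k * (b * (c ^ k * a)) := by rw [ih]; simp only [mul_assoc]
      _ = a ^ k * (b * (a * c ^ k)) := by rw [e1]
      _ = a ^ k * ((b * a) * c ^ k) := by simp only [mul_assoc]
      _ = a ^ k * ((a * (b * c)) * c ^ k) := by rw [hba' hc hab hCA hCB]
      _ = (a ^ k * a) * (b * (c * c ^ k)) := by simp only [mul_assoc]
      _ = a ^ (k + 1) * (b * c ^ (k + 1)) := by rw [← pow_succ, ← pow_succ']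

lemma keyL2 : ∀ n m : ℕ, b ^ n * a ^ m = a ^ m * (b ^ n * c ^ (n * m)) := by
  intro n m
  induction n with
  | zero => simp
  | succ k ih =>
    have e2 : c ^ (k * m) * b = b * c ^ (k * m) :=
      ((show Commute c b from hCB).pow_left (k * m)).eq
    calc b ^ (k + 1) * a ^ m = b ^ k * (b * a ^ m) := by rw [pow_succ, mul_assoc]
      _ = b ^ k * (a ^ m * (b * c ^ m)) := by rw [keyL1 hc hab hCA hCB]
      _ = (b ^ k * a ^ m) * (b * c ^ m) := by simp only [mul_assoc]
      _ = (a ^ m * (b ^ k * c ^ (k * m))) * (b * c ^ m) := by rw [ih]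
      _ = a ^ m * (b ^ k * (c ^ (k * m) * (b * c ^ m))) := by simp only [mul_assoc]
      _ = a ^ m * (b ^ k * (b * (c ^ (k * m) * c ^ m))) := by rw [swap_helper e2]
      _ = a ^ m * ((b ^ k * b) * (c ^ (k * m) * c ^ m)) := by simp only [mul_assoc]
      _ = a ^ m * (b ^ (k + 1) * c ^ ((k + 1) * m)) := by
          rw [← pow_succ, ← pow_add, Nat.succ_mul]

lemma keyProd (i1 j1 k1 i2 j2 k2 : ℕ) :
    (a ^ i1 * (b ^ j1 * c ^ k1)) * (a ^ i2 * (b ^ j2 * c ^ k2)) =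
    a ^ (i1 + i2) * (b ^ (j1 + j2) * c ^ (j1 * i2 + (k1 + k2))) := by
  have eCA : ∀ m n : ℕ, c ^ m * a ^ n = a ^ n * c ^ m :=
    fun m n => ((show Commute c a from hCA).pow_pow m n).eq
  have eCB : ∀ m n : ℕ, c ^ m * b ^ n = b ^ n * c ^ m :=
    fun m n => ((show Commute c b from hCB).pow_pow m n).eq
  calc (a ^ i1 * (b ^ j1 * c ^ k1)) * (a ^ i2 * (b ^ j2 * c ^ k2))
      = a ^ i1 * (b ^ j1 * (c ^ k1 * (a ^ i2 * (b ^ j2 * c ^ k2)))) := by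
        simp only [mul_assoc]
    _ = a ^ i1 * (b ^ j1 * (a ^ i2 * (c ^ k1 * (b ^ j2 * c ^ k2)))) := by
        rw [swap_helper (eCA k1 i2)]
    _ = a ^ i1 * (b ^ j1 * (a ^ i2 * (b ^ j2 * (c ^ k1 * c ^ k2)))) := by
        rw [swap_helper (eCB k1 j2)]
    _ = a ^ i1 * ((b ^ j1 * a ^ i2) * (b ^ j2 * (c ^ k1 * c ^ k2))) := by
        simp only [mul_assoc]
    _ = a ^ i1 * ((a ^ i2 * (b ^ j1 * c ^ (j1 * i2))) * (b ^ j2 * (c ^ k1 * c ^ k2))) := by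
        rw [keyL2 hc hab hCA hCB]
    _ = a ^ i1 * (a ^ i2 * (b ^ j1 * (c ^ (j1 * i2) * (b ^ j2 * (c ^ k1 * c ^ k2))))) := by
        simp only [mul_assoc]
    _ = a ^ i1 * (a ^ i2 * (b ^ j1 * (b ^ j2 * (c ^ (j1 * i2) * (c ^ k1 * c ^ k2))))) := by
        rw [swap_helper (eCB (j1 * i2) j2)]
    _ = (a ^ i1 * a ^ i2) * ((b ^ j1 * b ^ j2) * ((c ^ (j1 * i2) * c ^ k1) * c ^ k2)) := by
        simp only [mul_assoc]
    _ = a ^ (i1 + i2) * (b ^ (j1 + j2) * c ^ (j1 * i2 + (k1 + k2))) := by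
        rw [← pow_add, ← pow_add, ← pow_add, ← pow_add, Nat.add_assoc]

end


section
include ha hb hc hab hCA hCB

lemma phiM_mul (p q : MM) :
    phiM a b c (p * q) = phiM a b c p * phiM a b c q := by
  rcases p with ⟨i1, j1, k1⟩; rcases q with ⟨i2, j2, k2⟩
  simp only [MM.mul_def, phiM]
  rw [keyProd hc hab hCA hCB]
  have h1 : a ^ (i1 + i2).val = a ^ (i1.val + i2.val) := by
    apply pow_mod_eq ha; rw [ZMod.val_add]; omega
  have h2 : b ^ (j1 + j2).val = b ^ (j1.val + j2.val) := by
    apply pow_mod_eq hb; rw [ZMod.val_add]; omega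
  have h3 : c ^ (k1 + k2 + j1 * MMf i2).val = c ^ (j1.val * i2.val + (k1.val + k2.val)) := by
    apply pow_mod_eq hc
    rw [ZMod.val_add, ZMod.val_add, ZMod.val_mul, MMf_val]
    have hj : j1.val < 2 := ZMod.val_lt j1
    have hj' : j1.val = 0 ∨ j1.val = 1 := by omega
    rcases hj' with h | h <;> rw [h]
    · simp
    · simp only [one_mul]
      omega
  rw [h1, h2, h3]

def phiMHom : MM →* G where
  toFun := phiM a b c
  map_one' := by simp [phiM, MM.one_def]
  map_mul' := phiM_mul ha hb hc hab hCA hCB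

lemma card_closure_H16 (hc1 : c ≠ 1) (ha2 : a ^ 2 ≠ 1) (ha2c : a ^ 2 ≠ c) :
    Nat.card (Subgroup.closure {a, b} : Subgroup G) = 16 := by
  have hcinv : c⁻¹ = c := c_inv_eq hc
  have hnc : ¬ Commute a b := by
    intro h
    exact hc1 (hab ▸ commutatorElement_eq_one_iff_commute.mpr h)
  have ha1 : a ≠ 1 := by
    intro h; exact hnc (by rw [h]; exact Commute.one_left b)
  have hac : a ≠ c := by
    intro h
    exact hnc (h ▸ (show Commute c b from hCB))
  have hinj : Function.Injective (phiMHom ha hb hc hab hCA hCB) := by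
    rw [injective_iff_map_eq_one]
    rintro ⟨i, j, k⟩ h
    simp only [phiMHom, MonoidHom.coe_mk, OneHom.coe_mk, phiM] at h
    have hjv : j.val < 2 := ZMod.val_lt j
    have hkv : k.val < 2 := ZMod.val_lt k
    have hiv : i.val < 4 := ZMod.val_lt i
    interval_cases hjval : (ZMod.val j)
    · -- j = 0
      simp only [pow_zero, one_mul] at h
      have hj0 : j = 0 := by rwa [ZMod.val_eq_zero] at hjval
      interval_cases hkval : (ZMod.val k)
      · -- k = 0
        simp only [pow_zero, mul_one] at h
        have hk0 : k = 0 := by rwa [ZMod.val_eq_zero] at hkval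
        interval_cases hival : (ZMod.val i)
        · have hi0 : i = 0 := by rwa [ZMod.val_eq_zero] at hival
          rw [hi0, hj0, hk0]; rfl
        · exfalso; rw [pow_one] at h; exact ha1 h
        · exact absurd h ha2
        · exfalso; apply ha1
          calc a = a ^ 4 * (a ^ 3)⁻¹ := by group
            _ = 1 := by rw [ha, h]; simp
      · -- k = 1
        exfalso
        rw [pow_one] at h
        interval_cases hival : (ZMod.val i)
        · rw [pow_zero, one_mul] at h; exact hc1 h
        · rw [pow_one] at h
          exact hac (by rw [eq_inv_of_mul_eq_one_left h, hcinv])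
        · exact ha2c (by rw [eq_inv_of_mul_eq_one_left h, hcinv])
        · have h3 : a ^ 3 = c := by rw [eq_inv_of_mul_eq_one_left h, hcinv]
          have hac1 : a * c = 1 := by rw [← h3, ← pow_succ']; exact ha
          exact hac (by rw [eq_inv_of_mul_eq_one_left hac1, hcinv])
    · -- j = 1
      exfalso
      rw [pow_one] at h
      have h4 : (a ^ i.val)⁻¹ = b * c ^ k.val := inv_eq_of_mul_eq_one_right h
      have hbv : b = (a ^ i.val)⁻¹ * (c ^ k.val)⁻¹ := by
        rw [h4]; group
      have hcab : Commute a b := by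
        rw [hbv]
        exact (((Commute.refl a).pow_right i.val).inv_right).mul_right
          (((show Commute c a from hCA).symm.pow_right k.val).inv_right)
      exact hnc hcab
  have hrange : (phiMHom ha hb hc hab hCA hCB).range = Subgroup.closure {a, b} := by
    have hha : a ∈ Subgroup.closure ({a, b} : Set G) :=
      Subgroup.subset_closure (by simp)
    have hhb : b ∈ Subgroup.closure ({a, b} : Set G) :=
      Subgroup.subset_closure (by simp)
    have hhc : c ∈ Subgroup.closure ({a, b} : Set G) := by
      rw [← hab, commutatorElement_def]
      exact mul_mem (mul_mem (mul_mem hha hhb) (inv_mem hha)) (inv_mem hhb)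
    apply le_antisymm
    · rintro y ⟨⟨i, j, k⟩, rfl⟩
      exact mul_mem (pow_mem hha _) (mul_mem (pow_mem hhb _) (pow_mem hhc _))
    · rw [Subgroup.closure_le]
      rintro y (rfl | rfl)
      · exact ⟨⟨1, 0, 0⟩, by simp [phiMHom, phiM, show ((1 : ZMod 4)).val = 1 by decide]⟩
      · exact ⟨⟨0, 1, 0⟩, by simp [phiMHom, phiM, show ((1 : ZMod 2)).val = 1 by decide]⟩
  rw [← hrange, Nat.card_congr (MonoidHom.ofInjective hinj).toEquiv.symm, MM.card]

end

end H16

theorem involutions_central_of_no_D8_H16 (G : Type*) [Group G] [Finite G]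
    (hp : IsPGroup 2 G) (hexp : Monoid.exponent G = 4)
    (hnab : ¬ ∀ x y : G, x * y = y * x)
    -- no subgroup isomorphic to D₈
    (hD8 : ¬ ∃ a b : G, a ^ 4 = 1 ∧ b ^ 2 = 1 ∧ b * a * b = a⁻¹ ∧
      Nat.card (Subgroup.closure {a, b} : Subgroup G) = 8)
    -- no subgroup isomorphic to H₁₆
    (hH16 : ¬ ∃ a b c : G, a ^ 4 = 1 ∧ b ^ 2 = 1 ∧ c ^ 2 = 1 ∧ ⁅a, b⁆ = c ∧
      ⁅c, a⁆ = 1 ∧ ⁅c, b⁆ = 1 ∧ Nat.card (Subgroup.closure {a, b} : Subgroup G) = 16) :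
    ∀ t : G, orderOf t = 2 → t ∈ Subgroup.center G := by
  intro t ht
  have hexp4 : ∀ z : G, z ^ 4 = 1 := by
    intro z; rw [← hexp]; exact Monoid.pow_exponent_eq_one z
  -- any two involutions commute
  have hinvcomm : ∀ x y : G, x ^ 2 = 1 → y ^ 2 = 1 → x * y = y * x := by
    intro x y hx hy
    by_contra hxy
    have hxi : x⁻¹ = x := inv_eq_of_mul_eq_one_right (by rw [← pow_two]; exact hx)
    have hyi : y⁻¹ = y := inv_eq_of_mul_eq_one_right (by rw [← pow_two]; exact hy)
    have hinv : x * (x * y) * x = (x * y)⁻¹ := by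
      calc x * (x * y) * x = (x * x) * (y * x) := by group
        _ = y * x := by rw [← pow_two, hx, one_mul]
        _ = (x * y)⁻¹ := by rw [mul_inv_rev, hxi, hyi]
    have h2 : (x * y) ^ 2 ≠ 1 := by
      intro hsq
      apply hxy
      have hxyinv : (x * y)⁻¹ = x * y :=
        inv_eq_of_mul_eq_one_right (by rw [← pow_two]; exact hsq)
      calc x * y = (x * y)⁻¹ := hxyinv.symm
        _ = y⁻¹ * x⁻¹ := by rw [mul_inv_rev]
        _ = y * x := by rw [hxi, hyi]
    exact hD8 ⟨x * y, x, hexp4 _, hx, hinv,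
      card_closure_D8 (hexp4 _) hx hinv h2⟩
  rw [Subgroup.mem_center_iff]
  by_contra hcen
  push_neg at hcen
  obtain ⟨g0, hg0⟩ := hcen
  have ht2 : t ^ 2 = 1 := by rw [← ht]; exact pow_orderOf_eq_one t
  classical
  have hnil : Group.IsNilpotent G := by
    have : Fact (Nat.Prime 2) := ⟨Nat.prime_two⟩
    cases nonempty_fintype G
    exact hp.isNilpotent
  obtain ⟨n, hn⟩ := Subgroup.nilpotent_iff_lowerCentralSeries.mp hnil
  have hex : ∃ m : ℕ, ¬ ∃ s : G, s ^ 2 = 1 ∧ s ∈ (⊤ : Subgroup G).lowerCentralSeries m ∧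
      ∃ g : G, g * s ≠ s * g := by
    refine ⟨n, ?_⟩
    rintro ⟨s, hs2, hsmem, g, hgs⟩
    rw [hn, Subgroup.mem_bot] at hsmem
    rw [hsmem] at hgs
    simp at hgs
  have hP0 : ∃ s : G, s ^ 2 = 1 ∧ s ∈ (⊤ : Subgroup G).lowerCentralSeries 0 ∧ ∃ g : G, g * s ≠ s * g := by
    refine ⟨t, ht2, ?_, g0, hg0⟩
    rw [Subgroup.lowerCentralSeries_zero]
    trivial
  have hk : ¬ ∃ s : G, s ^ 2 = 1 ∧ s ∈ (⊤ : Subgroup G).lowerCentralSeries (Nat.find hex) ∧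
      ∃ g : G, g * s ≠ s * g := Nat.find_spec hex
  have hkpos : Nat.find hex ≠ 0 := by
    intro h
    rw [h] at hk
    exact hk hP0
  obtain ⟨i, hik⟩ : ∃ i, Nat.find hex = i + 1 := ⟨Nat.find hex - 1, by omega⟩
  have hPi : ∃ s : G, s ^ 2 = 1 ∧ s ∈ (⊤ : Subgroup G).lowerCentralSeries i ∧ ∃ g : G, g * s ≠ s * g :=
    not_not.mp (Nat.find_min hex (by omega))
  rw [hik] at hk
  obtain ⟨s, hs2, hsmem, g, hgs⟩ := hPi
  have hg4 : g ^ 4 = 1 := hexp4 g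
  have hsi : s⁻¹ = s := inv_eq_of_mul_eq_one_right (by rw [← pow_two]; exact hs2)
  set c := ⁅g, s⁆ with hcdef
  have hc1 : c ≠ 1 := by
    intro h
    exact hgs (commutatorElement_eq_one_iff_commute.mp h).eq
  have hcmem : c ∈ (⊤ : Subgroup G).lowerCentralSeries (i + 1) := by
    rw [Subgroup.lowerCentralSeries_succ]
    have hm : ⁅s, g⁆ ∈ Subgroup.closure
        {x : G | ∃ p ∈ (⊤ : Subgroup G).lowerCentralSeries i, ∃ q ∈ (⊤ : Subgroup G), p * q * p⁻¹ * q⁻¹ = x} :=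
      Subgroup.subset_closure ⟨s, hsmem, g, Subgroup.mem_top g, rfl⟩
    rw [show c = ⁅s, g⁆⁻¹ from by rw [commutatorElement_inv]]
    exact inv_mem hm
  have hscs : s * c * s = c⁻¹ := by
    have h1 : s * c * s = s * g * s * g⁻¹ * (s⁻¹ * s) := by
      rw [hcdef, commutatorElement_def]; group
    rw [inv_mul_cancel, mul_one] at h1
    have h2 : c⁻¹ = s * (g * (s⁻¹ * g⁻¹)) := by
      rw [hcdef, commutatorElement_def]; group
    rw [h1, h2, hsi]
    group
  have hc2 : c ^ 2 = 1 := by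
    by_contra hc2
    exact hD8 ⟨c, s, hexp4 c, hs2, hscs, card_closure_D8 (hexp4 c) hs2 hscs hc2⟩
  have hccen : ∀ z : G, z * c = c * z := by
    intro z
    by_contra hz
    exact hk ⟨c, hc2, hcmem, z, hz⟩
  by_cases hg2 : g ^ 2 = 1
  · exact hgs (hinvcomm g s hg2 hs2)
  by_cases hg2c : g ^ 2 = c
  · have hginv : g⁻¹ = g ^ 3 := inv_eq_of_mul_eq_one_right (by rw [← pow_succ']; exact hg4)
    have hcinv : c⁻¹ = c := inv_eq_of_mul_eq_one_right (by rw [← pow_two]; exact hc2)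
    have hsgs : s * g * s = g⁻¹ := by
      have hc' : c = g * s * g⁻¹ * s := by
        rw [hcdef, commutatorElement_def, hsi]
      have h1 : c⁻¹ * g = s * g * s := by
        rw [hc']
        simp only [mul_inv_rev, inv_inv, hsi]
        group
      rw [← h1, hcinv, ← hg2c, hginv, ← pow_succ]
    exact hD8 ⟨g, s, hg4, hs2, hsgs, card_closure_D8 hg4 hs2 hsgs hg2⟩
  · have hCA : c * g = g * c := (hccen g).symm
    have hCB : c * s = s * c := (hccen s).symm
    exact hH16 ⟨g, s, c, hg4, hs2, hc2, hcdef.symm,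
      commutatorElement_eq_one_iff_commute.mpr (show Commute c g from hCA),
      commutatorElement_eq_one_iff_commute.mpr (show Commute c s from hCB),
      card_closure_H16 hg4 hs2 hc2 hcdef.symm hCA hCB hc1 hg2 hg2c⟩
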